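/- If U(t) is a unitary propagator with a pure-point-generating factorization U(t) = U_p(t)e^{-iGt}U_p(0)^{-1} where U_p is T-periodic and G has pure point spectrum, then every trajectory {U(t)ψ : t ∈ ℝ} is precompact in H; consequently lim_{r→∞} sup_{t∈ℝ} ‖χ(|G| > r) e^{-iGt} U_p(0)^{-1}ψ‖ = 0. -/

import Mathlib

open Complex

private lemma totallyBounded_of_approx' {H : Type*} [PseudoMetricSpace H] {A : Set H}
    (h : ∀ ε : ℝ, 0 < ε → ∃ B : Set H, TotallyBounded B ∧ ∀ a ∈ A, ∃ x ∈ B, dist a x ≤ ε) :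
    TotallyBounded A := by
  rw [Metric.totallyBounded_iff]
  intro ε hε
  obtain ⟨B, hB, happ⟩ := h (ε / 3) (by linarith)
  obtain ⟨t, htfin, htcov⟩ := Metric.totallyBounded_iff.1 hB (ε / 3) (by linarith)
  refine ⟨t, htfin, fun a ha => ?_⟩
  obtain ⟨x, hxB, hax⟩ := happ a ha
  obtain ⟨y, hyt, hxy⟩ := Set.mem_iUnion₂.1 (htcov hxB)
  refine Set.mem_iUnion₂.2 ⟨y, hyt, Metric.mem_ball.2 ?_⟩
  have h1 : dist x y < ε / 3 := Metric.mem_ball.1 hxy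
  calc dist a y ≤ dist a x + dist x y := dist_triangle _ _ _
    _ < ε := by linarith

private lemma norm_sub_proj_sq' {H : Type*} [NormedAddCommGroup H] [InnerProductSpace ℂ H]
    [CompleteSpace H] (b : HilbertBasis ℕ ℂ H) (y : H) (s : Finset ℕ) :
    ‖y - ∑ n ∈ s.attach, (inner ℂ (b (n : ℕ)) y : ℂ) • b (n : ℕ)‖ ^ 2
      = ∑' n : { x // x ∉ s }, ‖(inner ℂ (b (n : ℕ)) y : ℂ)‖ ^ 2 := by
  classical
  set z := y - ∑ n ∈ s.attach, (inner ℂ (b (n : ℕ)) y : ℂ) • b (n : ℕ) with hz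
  have hcoord : ∀ i : ℕ, (b.repr z : ℕ → ℂ) i = if i ∈ s then 0 else inner ℂ (b i) y := by
    intro i
    rw [b.repr_apply_apply]
    rw [hz, inner_sub_right, inner_sum]
    have horth := orthonormal_iff_ite.1 b.orthonormal
    have : ∀ n ∈ s.attach, (inner ℂ (b i) ((inner ℂ (b (n : ℕ)) y : ℂ) • b (n : ℕ)) : ℂ)
        = if i = (n : ℕ) then (inner ℂ (b (n : ℕ)) y : ℂ) else 0 := by
      intro n _
      rw [inner_smul_right, horth]
      split <;> simp
    rw [Finset.sum_congr rfl this, Finset.sum_attach s (fun n => if i = n then (inner ℂ (b n) y : ℂ) else 0),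
      Finset.sum_ite_eq s i (fun n => (inner ℂ (b n) y : ℂ))]
    split <;> simp
  have hn : ‖z‖ = ‖b.repr z‖ := (b.repr.norm_map z).symm
  have h2 : (0 : ℝ) < (2 : ENNReal).toReal := by norm_num
  have hrp := lp.norm_rpow_eq_tsum h2 (b.repr z)
  have h2' : (2 : ENNReal).toReal = ((2 : ℕ) : ℝ) := by norm_num
  rw [h2'] at hrp
  simp only [Real.rpow_natCast] at hrp
  rw [hn, hrp]
  have : ∀ i : ℕ, ‖(b.repr z : ℕ → ℂ) i‖ ^ (2 : ℕ)
      = Set.indicator {x : ℕ | x ∉ s} (fun i => ‖(inner ℂ (b i) y : ℂ)‖ ^ 2) i := by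
    intro i
    rw [hcoord i, Set.indicator_apply]
    by_cases h : i ∈ s <;> simp [h]
  rw [tsum_congr this, ← tsum_subtype]
  rfl

theorem trajectories_precompact {H : Type*} [NormedAddCommGroup H]
    [InnerProductSpace ℂ H] [CompleteSpace H]
    (T : ℝ) (hT : 0 < T)
    (Up : ℝ → H →L[ℂ] H) (hUpcont : Continuous Up)
    (hUpunit : ∀ t, (Up t).adjoint * Up t = 1 ∧ Up t * (Up t).adjoint = 1)
    (hper : ∀ t, Up (t + T) = Up t)
    (b : HilbertBasis ℕ ℂ H) (l : ℕ → ℝ)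
    (V : ℝ → H →L[ℂ] H)
    (hVunit : ∀ t, (V t).adjoint * V t = 1 ∧ V t * (V t).adjoint = 1)
    (hV : ∀ t n, V t (b n) = Complex.exp (-(I * (l n : ℂ) * (t : ℂ))) • b n)
    (U : ℝ → H →L[ℂ] H) (hU : ∀ t, U t = Up t * V t * (Up 0).adjoint)
    (ψ : H) :
    TotallyBounded (Set.range fun t : ℝ => U t ψ) ∧
      ∀ ε : ℝ, 0 < ε → ∃ r₀ : ℝ, ∀ r : ℝ, r₀ ≤ r → ∀ t : ℝ,
        (∑' n : ℕ, if r < |l n| then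
            ‖(inner ℂ (b n) (V t ((Up 0).adjoint ψ)) : ℂ)‖ ^ 2 else 0) < ε := by
  classical
  set φ : H := (Up 0).adjoint ψ with hφ
  -- coefficient invariance
  have hA : ∀ (t : ℝ) (n : ℕ), ‖(inner ℂ (b n) (V t φ) : ℂ)‖ = ‖(inner ℂ (b n) φ : ℂ)‖ := by
    intro t n
    have hadj : (V t).adjoint (b n) = Complex.exp (I * (l n : ℂ) * t) • b n := by
      have h1 : (V t).adjoint (V t (b n)) = b n := by
        have := congrArg (fun A : H →L[ℂ] H => A (b n)) (hVunit t).1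
        simpa [ContinuousLinearMap.mul_apply] using this
      rw [hV t n, map_smul] at h1
      have hne : Complex.exp (-(I * (l n : ℂ) * t)) ≠ 0 := Complex.exp_ne_zero _
      calc (V t).adjoint (b n)
          = (Complex.exp (-(I * (l n : ℂ) * t)))⁻¹ •
              (Complex.exp (-(I * (l n : ℂ) * t)) • (V t).adjoint (b n)) := by
            rw [smul_smul, inv_mul_cancel₀ hne, one_smul]
        _ = Complex.exp (I * (l n : ℂ) * t) • b n := by
            rw [h1, Complex.exp_neg, inv_inv]
    rw [← ContinuousLinearMap.adjoint_inner_left, hadj, inner_smul_left, norm_mul]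
    have hone : ‖(starRingEnd ℂ) (Complex.exp (I * (l n : ℂ) * t))‖ = 1 := by
      rw [RCLike.norm_conj]
      rw [Complex.norm_exp]
      have : (I * (l n : ℂ) * t).re = 0 := by simp
      rw [this, Real.exp_zero]
    rw [hone, one_mul]
  set f : ℕ → ℝ := fun n => ‖(inner ℂ (b n) φ : ℂ)‖ ^ 2 with hfdef
  have hf0 : ∀ n, 0 ≤ f n := fun n => sq_nonneg _
  have hsum : Summable f := by
    have hm := lp.memℓp (b.repr φ)
    rw [memℓp_gen_iff (by norm_num : (0 : ℝ) < (2 : ENNReal).toReal)] at hm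
    refine hm.congr fun i => ?_
    have h2' : (2 : ENNReal).toReal = ((2 : ℕ) : ℝ) := by norm_num
    rw [h2', Real.rpow_natCast, b.repr_apply_apply]
  have htail : ∀ δ : ℝ, 0 < δ → ∃ s : Finset ℕ, (∑' n : { x // x ∉ s }, f n) < δ := by
    intro δ hδ
    exact ((tendsto_order.1 (tendsto_tsum_compl_atTop_zero f)).2 δ hδ).exists
  -- key bound
  have hbound : ∀ (s : Finset ℕ) (r : ℝ), (∀ n ∈ s, |l n| ≤ r) → ∀ t : ℝ,
      (∑' n : ℕ, if r < |l n| then ‖(inner ℂ (b n) (V t φ) : ℂ)‖ ^ 2 else 0)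
        ≤ ∑' n : { x // x ∉ s }, f n := by
    intro s r hr t
    have heq : (∑' n : { x // x ∉ s }, f n)
        = ∑' n : ℕ, Set.indicator {x : ℕ | x ∉ s} f n := tsum_subtype _ f
    rw [heq]
    have hle : ∀ n : ℕ, (if r < |l n| then ‖(inner ℂ (b n) (V t φ) : ℂ)‖ ^ 2 else 0)
        ≤ Set.indicator {x : ℕ | x ∉ s} f n := by
      intro n
      by_cases h : r < |l n|
      · have hns : n ∉ s := fun hn => absurd (le_trans (hr n hn) le_rfl) (not_le.2 h)
        rw [if_pos h, Set.indicator_of_mem (show n ∈ {x : ℕ | x ∉ s} from hns) f]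
        exact le_of_eq (by rw [hA t n])
      · rw [if_neg h]
        exact Set.indicator_nonneg (fun a _ => hf0 a) n
    refine Summable.tsum_le_tsum hle ?_ (hsum.indicator _)
    exact Summable.of_nonneg_of_le
      (fun n => by positivity) hle (hsum.indicator _)
  -- totally bounded for V-trajectory
  have htbV : TotallyBounded (Set.range fun t : ℝ => V t φ) := by
    apply totallyBounded_of_approx'
    intro ε hε
    obtain ⟨s, hs⟩ := htail (ε ^ 2) (by positivity)
    set g : ((n : { x // x ∈ s }) → ℂ) → H := fun c => ∑ n ∈ s.attach, c n • b (n : ℕ) with hg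
    have hgc : Continuous g :=
      continuous_finset_sum _ fun n _ => (continuous_apply n).smul continuous_const
    refine ⟨g '' Metric.closedBall 0 (‖φ‖ + 1),
      ((isCompact_closedBall _ _).image hgc).totallyBounded, ?_⟩
    rintro a ⟨t, rfl⟩
    set c : (n : { x // x ∈ s }) → ℂ := fun n => inner ℂ (b (n : ℕ)) (V t φ) with hc
    have hcmem : c ∈ Metric.closedBall (0 : (n : { x // x ∈ s }) → ℂ) (‖φ‖ + 1) := by
      rw [Metric.mem_closedBall, dist_zero_right]
      refine pi_norm_le_iff_of_nonneg (by positivity) |>.2 fun n => ?_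
      rw [hc]
      calc ‖(inner ℂ (b (n : ℕ)) (V t φ) : ℂ)‖ = ‖(inner ℂ (b (n : ℕ)) φ : ℂ)‖ := hA t n
        _ ≤ ‖b (n : ℕ)‖ * ‖φ‖ := norm_inner_le_norm _ _
        _ = ‖φ‖ := by rw [b.orthonormal.1 (n : ℕ), one_mul]
        _ ≤ ‖φ‖ + 1 := by linarith
    refine ⟨g c, ⟨c, hcmem, rfl⟩, ?_⟩
    rw [dist_eq_norm]
    have hsq : ‖V t φ - g c‖ ^ 2 = ∑' n : { x // x ∉ s }, ‖(inner ℂ (b (n : ℕ)) (V t φ) : ℂ)‖ ^ 2 :=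
      norm_sub_proj_sq' b (V t φ) s
    have hsq2 : ‖V t φ - g c‖ ^ 2 < ε ^ 2 := by
      rw [hsq]
      calc (∑' n : { x // x ∉ s }, ‖(inner ℂ (b (n : ℕ)) (V t φ) : ℂ)‖ ^ 2)
          = ∑' n : { x // x ∉ s }, f (n : ℕ) := by
            refine tsum_congr fun n => ?_
            rw [hA t (n : ℕ)]
        _ < ε ^ 2 := hs
    exact le_of_lt (lt_of_pow_lt_pow_left₀ 2 hε.le hsq2)
  -- assemble
  constructor
  · have hK : IsCompact (closure (Set.range fun t : ℝ => V t φ)) :=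
      TotallyBounded.isCompact_of_isClosed htbV.closure isClosed_closure
    have hC : IsCompact ((fun p : ℝ × H => Up p.1 p.2) ''
        (Set.Icc 0 T ×ˢ closure (Set.range fun t : ℝ => V t φ))) :=
      (isCompact_Icc.prod hK).image ((hUpcont.comp continuous_fst).clm_apply continuous_snd)
    refine TotallyBounded.subset ?_ hC.totallyBounded
    rintro _ ⟨t, rfl⟩
    have hper' : Function.Periodic Up T := hper
    obtain ⟨t', ht', heq⟩ := hper'.exists_mem_Ico₀ hT t
    refine ⟨(t', V t φ), ⟨⟨ht'.1, ht'.2.le⟩, subset_closure ⟨t, rfl⟩⟩, ?_⟩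
    show Up t' (V t φ) = U t ψ
    rw [← heq, hU t]
    simp [ContinuousLinearMap.mul_apply, hφ]
  · intro ε hε
    obtain ⟨s, hs⟩ := htail ε hε
    refine ⟨((s.sup fun n => (⟨|l n|, abs_nonneg _⟩ : NNReal) : NNReal) : ℝ), fun r hr t => ?_⟩
    have hlr : ∀ n ∈ s, |l n| ≤ r := by
      intro n hn
      have h1 := Finset.le_sup (f := fun n => (⟨|l n|, abs_nonneg _⟩ : NNReal)) hn
      exact le_trans (NNReal.coe_le_coe.2 h1) hr
    exact lt_of_le_of_lt (hbound s r hlr t) hs
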